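/- Let δ be the extended transition function of a commutative STS with at most w states, defined on binary strings, and let n ≥ w. Then there exist nonnegative integers a, m, b with a + m + b = w and m ≥ 1 such that for all x, x', y, y' ≥ 0 with x + y = x' + y' = n, x, x' ≥ a, y, y' ≥ b, and x ≡ x' (mod m), we have δ(1^x 0^y) = δ(1^{x'} 0^{y'}). -/
import Mathlib


/-- The extended transition function of a state transition system. -/
def delta {S : Type*} (f0 f1 : S → S) (s0 : S) (l : List Bool) : S :=
  l.foldl (fun s b => if b then f1 s else f0 s) s0

private lemma foldl_replicate_true {S : Type*} (f0 f1 : S → S) (k : ℕ) (s : S) :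
    (List.replicate k true).foldl (fun s b => if b then f1 s else f0 s) s = f1^[k] s := by
  induction k generalizing s with
  | zero => simp
  | succ k ih => simp [List.replicate_succ, ih, Function.iterate_succ_apply]

private lemma foldl_replicate_false {S : Type*} (f0 f1 : S → S) (k : ℕ) (s : S) :
    (List.replicate k false).foldl (fun s b => if b then f1 s else f0 s) s = f0^[k] s := by
  induction k generalizing s with
  | zero => simp
  | succ k ih => simp [List.replicate_succ, ih, Function.iterate_succ_apply]

private lemma delta_eq {S : Type*} (f0 f1 : S → S) (s0 : S) (x y : ℕ) :
    delta f0 f1 s0 (List.replicate x true ++ List.replicate y false)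
      = f0^[y] (f1^[x] s0) := by
  unfold delta
  rw [List.foldl_append, foldl_replicate_true, foldl_replicate_false]

/-- The one-step periodicity propagation. -/
private lemma step {S : Type*} (f0 f1 : S → S) (s0 : S)
    (hC : ∀ i j (s : S), f0^[i] (f1^[j] s) = f1^[j] (f0^[i] s))
    (a m b : ℕ)
    (E : f0^[b + m] (f1^[a] s0) = f0^[b] (f1^[a + m] s0))
    (x y : ℕ) (hx : a ≤ x) (hy : b + m ≤ y) :
    f0^[y] (f1^[x] s0) = f0^[y - m] (f1^[x + m] s0) := by
  obtain ⟨p, rfl⟩ : ∃ p, x = p + a := ⟨x - a, by omega⟩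
  obtain ⟨q, rfl⟩ : ∃ q, y = q + (b + m) := ⟨y - (b + m), by omega⟩
  have h1 : q + (b + m) - m = q + b := by omega
  have h2 : p + a + m = p + (a + m) := by omega
  rw [h1, h2, Function.iterate_add_apply f0 q (b + m), Function.iterate_add_apply f1 p a,
    Function.iterate_add_apply f0 q b, Function.iterate_add_apply f1 p (a + m),
    hC (b + m) p, hC b p, E]

private lemma chain {S : Type*} (f0 f1 : S → S) (s0 : S)
    (hC : ∀ i j (s : S), f0^[i] (f1^[j] s) = f1^[j] (f0^[i] s))
    (a m b : ℕ)
    (E : f0^[b + m] (f1^[a] s0) = f0^[b] (f1^[a + m] s0)) :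
    ∀ (k x y : ℕ), a ≤ x → b + k * m ≤ y →
      f0^[y] (f1^[x] s0) = f0^[y - k * m] (f1^[x + k * m] s0) := by
  intro k
  induction k with
  | zero => simp
  | succ k ih =>
    intro x y hx hy
    rw [Nat.succ_mul] at hy ⊢
    set K := k * m with hK
    have h1 : b + m ≤ y := by omega
    rw [step f0 f1 s0 hC a m b E x y hx h1]
    have h2 := ih (x + m) (y - m) (by omega) (by omega)
    rw [h2]
    have e1 : y - m - k * m = y - (k * m + m) := by omega
    have e2 : x + m + k * m = x + (k * m + m) := by omega
    rw [e1, e2]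

theorem stmt_2 {S : Type*} [Fintype S] (f0 f1 : S → S) (s0 : S)
    (hcomm : ∀ s, f0 (f1 s) = f1 (f0 s))
    (w n : ℕ) (hcard : Fintype.card S ≤ w) (hn : w ≤ n) :
    ∃ a m b : ℕ, a + m + b = w ∧ 1 ≤ m ∧
      ∀ x x' y y' : ℕ, x + y = n → x' + y' = n →
        a ≤ x → a ≤ x' → b ≤ y → b ≤ y' → x % m = x' % m →
        delta f0 f1 s0 (List.replicate x true ++ List.replicate y false) =
        delta f0 f1 s0 (List.replicate x' true ++ List.replicate y' false) := by
  have hc : Function.Commute f0 f1 := hcomm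
  have hC : ∀ i j (s : S), f0^[i] (f1^[j] s) = f1^[j] (f0^[i] s) :=
    fun i j s => ((hc.iterate_left i).iterate_right j) s
  -- pigeonhole
  have hlt : Fintype.card S < Fintype.card (Fin (w + 1)) := by
    simp only [Fintype.card_fin]; omega
  obtain ⟨i, j, hij, hgij⟩ :=
    Fintype.exists_ne_map_eq_of_card_lt
      (fun i : Fin (w + 1) => f0^[w - (i : ℕ)] (f1^[(i : ℕ)] s0)) hlt
  -- reduce to ordered pair (u < v) with equal states
  obtain ⟨u, v, huv, huw, hvw, hE0⟩ :
      ∃ u v : ℕ, u < v ∧ u ≤ w ∧ v ≤ w ∧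
        f0^[w - u] (f1^[u] s0) = f0^[w - v] (f1^[v] s0) := by
    rcases lt_or_gt_of_ne (show (i : ℕ) ≠ (j : ℕ) from fun h => hij (Fin.val_injective h)) with h | h
    · exact ⟨i, j, h, by omega, by omega, hgij⟩
    · exact ⟨j, i, h, by omega, by omega, hgij.symm⟩
  refine ⟨u, v - u, w - v, by omega, by omega, ?_⟩
  set a := u
  set m := v - u with hm
  set b := w - v with hb
  have E : f0^[b + m] (f1^[a] s0) = f0^[b] (f1^[a + m] s0) := by
    have e1 : b + m = w - u := by omega
    have e2 : a + m = v := by omega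
    rw [e1, e2]
    exact hE0
  have main : ∀ x x' y y' : ℕ, x + y = n → x' + y' = n →
      a ≤ x → b ≤ y' → x ≤ x' → x % m = x' % m →
      f0^[y] (f1^[x] s0) = f0^[y'] (f1^[x'] s0) := by
    intro x x' y y' hxy hxy' hax hby' hle hmod
    obtain ⟨k, hk⟩ := (Nat.modEq_iff_dvd' hle).mp hmod
    rw [Nat.mul_comm] at hk
    have hkk : x + k * m = x' := by omega
    have hyy : b + k * m ≤ y := by omega
    have e1 : y - k * m = y' := by omega
    rw [chain f0 f1 s0 hC a m b E k x y hax hyy, e1, hkk]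
  intro x x' y y' hxy hxy' hax hax' hby hby' hmod
  rw [delta_eq, delta_eq]
  rcases le_total x x' with h | h
  · exact main x x' y y' hxy hxy' hax hby' h hmod
  · exact (main x' x y' y hxy' hxy hax' hby h hmod.symm).symm
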